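/- Let X be a measurable space carrying a probability measure μ, let Y be a metric space, let λ > 0, let c : X × Y → ℝ be bounded and measurable in its first argument for each fixed y, let φ : X → ℝ be bounded and measurable, and let ω : ℝ → ℝ be nondecreasing. If |c(x, y) − c(x, y′)| ≤ ω(dist(y, y′)) for all x ∈ X and y, y′ ∈ Y, then the function φ^{c,λ}(y) = −λ · log ∫_X exp((φ(x) − c(x, y))/λ) dμ(x) satisfies |φ^{c,λ}(y) − φ^{c,λ}(y′)| ≤ ω(dist(y, y′)) for all y, y′ ∈ Y. -/

import Mathlib

open MeasureTheory

/-- The `(c,λ)`-transform `φ^{c,λ}(y) = -λ log ∫ exp((φ(x) - c(x,y))/λ) dμ(x)` inherits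
any modulus of continuity `ω` of the cost `c` in its second variable. -/
theorem cLambda_transform_modulus {X : Type*} [MeasurableSpace X]
    (μ : Measure X) [IsProbabilityMeasure μ]
    {Y : Type*} [MetricSpace Y] (lam : ℝ) (hlam : 0 < lam)
    (c : X → Y → ℝ) (Mc : ℝ) (hcb : ∀ x y, |c x y| ≤ Mc)
    (hcm : ∀ y, Measurable fun x => c x y)
    (φ : X → ℝ) (Mφ : ℝ) (hφb : ∀ x, |φ x| ≤ Mφ) (hφm : Measurable φ)
    (ω : ℝ → ℝ) (hω : Monotone ω)
    (hmod : ∀ x y y', |c x y - c x y'| ≤ ω (dist y y')) :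
    ∀ y y' : Y,
      |(-lam * Real.log (∫ x, Real.exp ((φ x - c x y) / lam) ∂μ)) -
        (-lam * Real.log (∫ x, Real.exp ((φ x - c x y') / lam) ∂μ))| ≤
      ω (dist y y') := by
  have hInt : ∀ y : Y, Integrable (fun x => Real.exp ((φ x - c x y) / lam)) μ := by
    intro y
    apply Integrable.mono' (integrable_const (Real.exp ((Mφ + Mc) / lam)))
    · exact (((hφm.sub (hcm y)).div_const lam).exp).aestronglyMeasurable
    · filter_upwards with x
      simp only [Real.norm_eq_abs, Real.abs_exp]
      apply Real.exp_le_exp.mpr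
      have h1 := abs_le.mp (hφb x)
      have h2 := abs_le.mp (hcb x y)
      apply div_le_div_of_nonneg_right ?_ hlam.le <;> try linarith
  have hpos : ∀ y : Y, 0 < ∫ x, Real.exp ((φ x - c x y) / lam) ∂μ := by
    intro y
    have hle : Real.exp ((-(Mφ + Mc)) / lam) ≤ ∫ x, Real.exp ((φ x - c x y) / lam) ∂μ := by
      calc Real.exp ((-(Mφ + Mc)) / lam) = ∫ _x, Real.exp ((-(Mφ + Mc)) / lam) ∂μ := by simp
        _ ≤ _ := by
            apply integral_mono (integrable_const _) (hInt y)
            intro x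
            apply Real.exp_le_exp.mpr
            have h1 := abs_le.mp (hφb x)
            have h2 := abs_le.mp (hcb x y)
            apply div_le_div_of_nonneg_right ?_ hlam.le <;> try linarith
    linarith [Real.exp_pos ((-(Mφ + Mc)) / lam)]
  have key : ∀ y y' : Y,
      (-lam * Real.log (∫ x, Real.exp ((φ x - c x y) / lam) ∂μ)) -
      (-lam * Real.log (∫ x, Real.exp ((φ x - c x y') / lam) ∂μ)) ≤ ω (dist y y') := by
    intro y y'
    have hle : (∫ x, Real.exp ((φ x - c x y') / lam) ∂μ)
        ≤ Real.exp (ω (dist y y') / lam) * ∫ x, Real.exp ((φ x - c x y) / lam) ∂μ := by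
      rw [← integral_const_mul]
      apply integral_mono (hInt y') ((hInt y).const_mul _)
      intro x
      dsimp only
      rw [← Real.exp_add]
      apply Real.exp_le_exp.mpr
      rw [← add_div]
      have h1 : c x y - c x y' ≤ ω (dist y y') := (abs_le.mp (hmod x y y')).2
      apply div_le_div_of_nonneg_right ?_ hlam.le <;> try linarith
    have hlog : Real.log (∫ x, Real.exp ((φ x - c x y') / lam) ∂μ)
        ≤ ω (dist y y') / lam + Real.log (∫ x, Real.exp ((φ x - c x y) / lam) ∂μ) := by
      have := Real.log_le_log (hpos y') hle
      rwa [Real.log_mul (Real.exp_ne_zero _) (hpos y).ne', Real.log_exp] at this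
    have hmul : lam * (Real.log (∫ x, Real.exp ((φ x - c x y') / lam) ∂μ)
        - Real.log (∫ x, Real.exp ((φ x - c x y) / lam) ∂μ)) ≤ ω (dist y y') := by
      rw [mul_comm, ← le_div_iff₀ hlam]
      linarith
    nlinarith [hmul]
  intro y y'
  rw [abs_sub_le_iff]
  refine ⟨key y y', ?_⟩
  rw [dist_comm]
  exact key y' y
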